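/- For every fractional stable allocation x₀ in which every job is fully allocated, there exists a relaxed unsplit stable assignment x such that for every job j, j's assigned machine in x is weakly preferred by j to j's least-preferred machine receiving positive allocation in x₀ (i.e., the rounding never worsens any job's worst allocated edge). -/

import Mathlib

open Finset

/-- An instance of the (relaxed) unsplittable stable allocation problem:
a finite bipartite graph between jobs `J` and machines `M` given by the
adjacency relation `adj`, sizes `qJ` and capacities `qM`, strict preferences
encoded by injective rank functions (smaller rank = more preferred), and a
dummy machine `md` adjacent to every job, ranked last by every job, whose
capacity exceeds the total size of all jobs. -/
structure Inst (J M : Type) [Fintype J] [DecidableEq J] [Fintype M] [DecidableEq M] where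
  adj : J → M → Prop
  qJ : J → ℝ
  qM : M → ℝ
  qJ_pos : ∀ j, 0 < qJ j
  qM_pos : ∀ m, 0 < qM m
  rankJ : J → M → ℕ
  rankM : M → J → ℕ
  rankJ_inj : ∀ j m m', adj j m → adj j m' → rankJ j m = rankJ j m' → m = m'
  rankM_inj : ∀ m j j', adj j m → adj j' m → rankM m j = rankM m j' → j = j'
  md : M
  md_adj : ∀ j, adj j md
  md_last : ∀ j m, adj j m → m ≠ md → rankJ j m < rankJ j md
  md_cap : (∑ j : J, qJ j) < qM md

variable {J M : Type} [Fintype J] [DecidableEq J] [Fintype M] [DecidableEq M]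

/-- `x(m)`: the total size assigned to machine `m` by the unsplit assignment
`a : J → M` (each job is assigned in its entirety to exactly one machine). -/
def load (I : Inst J M) (a : J → M) (m : M) : ℝ :=
  ∑ j ∈ Finset.univ.filter (fun j => a j = m), I.qJ j

/-- `a` is a valid unsplit assignment: every job is assigned along an edge. -/
def IsUnsplit (I : Inst J M) (a : J → M) : Prop :=
  ∀ j, I.adj j (a j)

/-- The relaxed capacity condition: for every machine `m` with at least one
assigned job, removing the least preferred job `j` assigned to `m` (largest
rank among assigned jobs) leaves `m` strictly below its capacity. -/
def IsRelaxed (I : Inst J M) (a : J → M) : Prop :=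
  ∀ m j, a j = m → (∀ j', a j' = m → I.rankM m j' ≤ I.rankM m j) →
    load I a m - I.qJ j < I.qM m

/-- Edge `jm` (with `a j ≠ m`) blocks `a`: `j` prefers `m` to its assigned
machine, and the total size of jobs assigned to `m` that `m` prefers to `j`
is below `m`'s capacity. -/
def Blocks (I : Inst J M) (a : J → M) (j : J) (m : M) : Prop :=
  I.adj j m ∧ a j ≠ m ∧ I.rankJ j m < I.rankJ j (a j) ∧
  (∑ j' ∈ Finset.univ.filter (fun j' => a j' = m ∧ I.rankM m j' < I.rankM m j), I.qJ j')
    < I.qM m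

/-- A relaxed unsplit stable assignment. -/
def IsStable (I : Inst J M) (a : J → M) : Prop :=
  IsUnsplit I a ∧ IsRelaxed I a ∧ ∀ j m, ¬ Blocks I a j m

/-- Machine `m` weakly prefers `a1` to `a2` (lexicographic order): either the
sets of jobs assigned to `m` coincide, or the best job (in `m`'s preference)
among the jobs assigned to `m` in exactly one of the two assignments is
assigned to `m` in `a1`. -/
def MPrefers (I : Inst J M) (m : M) (a1 a2 : J → M) : Prop :=
  (∀ j, a1 j = m ↔ a2 j = m) ∨
  ∃ j, a1 j = m ∧ a2 j ≠ m ∧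
    ∀ j', ((a1 j' = m ∧ a2 j' ≠ m) ∨ (a2 j' = m ∧ a1 j' ≠ m)) →
      I.rankM m j ≤ I.rankM m j'

/-- Job `j` weakly prefers its machine in `a1` to its machine in `a2`. -/
def JPrefers (I : Inst J M) (j : J) (a1 a2 : J → M) : Prop :=
  I.rankJ j (a1 j) ≤ I.rankJ j (a2 j)

/-- A machine-optimal relaxed unsplit stable assignment. -/
def MOptimal (I : Inst J M) (a : J → M) : Prop :=
  IsStable I a ∧ ∀ a', IsStable I a' → ∀ m, MPrefers I m a a'

/-- A job-optimal relaxed unsplit stable assignment. -/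
def JOptimal (I : Inst J M) (a : J → M) : Prop :=
  IsStable I a ∧ ∀ a', IsStable I a' → ∀ j, JPrefers I j a a'

/-- The size `|x|` of an unsplit assignment: total size of the jobs assigned
to a real (non-dummy) machine. -/
def totalSize (I : Inst J M) (a : J → M) : ℝ :=
  ∑ j ∈ Finset.univ.filter (fun j => a j ≠ I.md), I.qJ j

/-- `x(j)`: total allocation of job `j`. -/
def loadJ (I : Inst J M) (x : J → M → ℝ) (j : J) : ℝ := ∑ m, x j m

/-- `x(m)`: total allocation on machine `m`. -/
def loadM (I : Inst J M) (x : J → M → ℝ) (m : M) : ℝ := ∑ j, x j m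

/-- A (fractional) stable allocation: a feasible allocation supported on the
edges such that for every edge `jm` with `x(jm) < q(j)`, either `j` is fully
allocated on edges weakly preferred to `jm`, or `m` is fully allocated on
edges weakly preferred to `jm`. -/
def FracStable (I : Inst J M) (x : J → M → ℝ) : Prop :=
  (∀ j m, ¬ I.adj j m → x j m = 0) ∧
  (∀ j m, 0 ≤ x j m ∧ x j m ≤ I.qJ j) ∧
  (∀ j, loadJ I x j ≤ I.qJ j) ∧
  (∀ m, loadM I x m ≤ I.qM m) ∧
  (∀ j m, I.adj j m → x j m < I.qJ j →
    (∑ m' ∈ Finset.univ.filter (fun m' => I.rankJ j m' ≤ I.rankJ j m), x j m') = I.qJ j ∨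
    (∑ j' ∈ Finset.univ.filter (fun j' => I.rankM m j' ≤ I.rankM m j), x j' m) = I.qM m)

section Rounding

attribute [local instance 10] Classical.propDecidable

/-- Invariants of the deferred-acceptance process: every job is assigned along
an edge; any machine a job strictly prefers to its current machine is filled
to capacity with better jobs; and no job has been pushed past any machine
receiving positive allocation in `x0`. -/
def Good (I : Inst J M) (x0 : J → M → ℝ) (a : J → M) : Prop :=
  (∀ j, I.adj j (a j)) ∧
  (∀ j m, I.adj j m → I.rankJ j m < I.rankJ j (a j) →
    I.qM m ≤ ∑ j' ∈ Finset.univ.filter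
      (fun j' => a j' = m ∧ I.rankM m j' < I.rankM m j), I.qJ j') ∧
  (∀ j m, 0 < x0 j m → I.rankJ j (a j) ≤ I.rankJ j m)

/-- A rejection step is possible: some machine is overloaded even after
discounting its least preferred job. -/
def CanStep (I : Inst J M) (a : J → M) : Prop :=
  ∃ j, (∀ j', a j' = a j → I.rankM (a j) j' ≤ I.rankM (a j) j) ∧
    I.qM (a j) ≤ load I a (a j) - I.qJ j

/-- Potential function: total rank of assigned machines. -/
def Phi (I : Inst J M) (a : J → M) : ℕ := ∑ j : J, I.rankJ j (a j)

lemma load_le_total (I : Inst J M) (a : J → M) (m : M) :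
    load I a m ≤ ∑ j : J, I.qJ j := by
  apply Finset.sum_le_sum_of_subset_of_nonneg (Finset.filter_subset _ _)
  intro j _ _; exact (I.qJ_pos j).le

lemma key_sum (I : Inst J M) (a : J → M) (h1 : ∀ j, I.adj j (a j)) (j : J)
    (hworst : ∀ j', a j' = a j → I.rankM (a j) j' ≤ I.rankM (a j) j) :
    load I a (a j) - I.qJ j =
      ∑ j' ∈ Finset.univ.filter
        (fun j' => a j' = a j ∧ I.rankM (a j) j' < I.rankM (a j) j), I.qJ j' := by
  have hj : j ∈ Finset.univ.filter (fun j' => a j' = a j) := by simp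
  have hsplit := Finset.sum_erase_add (Finset.univ.filter (fun j' => a j' = a j)) I.qJ hj
  have hset : (Finset.univ.filter (fun j' => a j' = a j)).erase j =
      Finset.univ.filter (fun j' => a j' = a j ∧ I.rankM (a j) j' < I.rankM (a j) j) := by
    ext j'
    simp only [Finset.mem_erase, Finset.mem_filter, Finset.mem_univ, true_and]
    constructor
    · rintro ⟨hne, heq⟩
      refine ⟨heq, lt_of_le_of_ne (hworst j' heq) ?_⟩
      intro hr
      exact hne (I.rankM_inj (a j) j' j (heq ▸ h1 j') (h1 j) hr)
    · rintro ⟨heq, hlt⟩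
      refine ⟨fun h => ?_, heq⟩
      subst h; omega
  rw [load, ← hsplit, hset]; ring

lemma exists_good (I : Inst J M) (x0 : J → M → ℝ)
    (hz : ∀ j m, ¬ I.adj j m → x0 j m = 0) : ∃ a, Good I x0 a := by
  have h : ∀ j : J, ∃ m, I.adj j m ∧ ∀ m', I.adj j m' → I.rankJ j m ≤ I.rankJ j m' := by
    intro j
    obtain ⟨m, hm, hmin⟩ := Finset.exists_min_image
      (Finset.univ.filter fun m => I.adj j m) (I.rankJ j)
      ⟨I.md, by simp [I.md_adj j]⟩
    exact ⟨m, (Finset.mem_filter.1 hm).2, fun m' h' => hmin m' (by simp [h'])⟩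
  choose a ha hmin using h
  refine ⟨a, ha, ?_, ?_⟩
  · intro j m hadj hlt
    exact absurd (hmin j m hadj) (by omega)
  · intro j m hpos
    have hadj : I.adj j m := by
      by_contra h
      rw [hz j m h] at hpos; exact lt_irrefl _ hpos
    exact hmin j m hadj

lemma no_support_reject (I : Inst J M) (x0 : J → M → ℝ) (hx : FracStable I x0)
    (a : J → M) (h1 : ∀ j, I.adj j (a j))
    (h3 : ∀ j m, 0 < x0 j m → I.rankJ j (a j) ≤ I.rankJ j m)
    (j : J)
    (hkey : I.qM (a j) ≤ ∑ j' ∈ Finset.univ.filter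
      (fun j' => a j' = a j ∧ I.rankM (a j) j' < I.rankM (a j) j), I.qJ j') :
    x0 j (a j) = 0 := by
  obtain ⟨hz, hbounds, hloadJ, hloadM, hstab⟩ := hx
  by_contra hne
  have hpos : 0 < x0 j (a j) := lt_of_le_of_ne (hbounds j (a j)).1 (Ne.symm hne)
  have hjB : j ∉ Finset.univ.filter
      (fun j' => a j' = a j ∧ I.rankM (a j) j' < I.rankM (a j) j) := by simp
  have hsum1 : x0 j (a j) + ∑ j' ∈ Finset.univ.filter
      (fun j' => a j' = a j ∧ I.rankM (a j) j' < I.rankM (a j) j), x0 j' (a j)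
      ≤ loadM I x0 (a j) := by
    have hL : loadM I x0 (a j) = ∑ i, x0 i (a j) := rfl
    have e1 : ∑ i ∈ insert j (Finset.univ.filter
        (fun j' => a j' = a j ∧ I.rankM (a j) j' < I.rankM (a j) j)), x0 i (a j)
        = x0 j (a j) + ∑ j' ∈ Finset.univ.filter
        (fun j' => a j' = a j ∧ I.rankM (a j) j' < I.rankM (a j) j), x0 j' (a j) :=
      Finset.sum_insert hjB
    have e2 : ∑ i ∈ insert j (Finset.univ.filter
        (fun j' => a j' = a j ∧ I.rankM (a j) j' < I.rankM (a j) j)), x0 i (a j)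
        ≤ ∑ i, x0 i (a j) :=
      Finset.sum_le_sum_of_subset_of_nonneg (Finset.subset_univ _)
        (fun i _ _ => (hbounds i (a j)).1)
    rw [hL]
    linarith
  have hlt : ∑ j' ∈ Finset.univ.filter
      (fun j' => a j' = a j ∧ I.rankM (a j) j' < I.rankM (a j) j), x0 j' (a j)
      < ∑ j' ∈ Finset.univ.filter
      (fun j' => a j' = a j ∧ I.rankM (a j) j' < I.rankM (a j) j), I.qJ j' := by
    have := hloadM (a j)
    linarith
  obtain ⟨j', hj'B, hj'lt⟩ := Finset.exists_lt_of_sum_lt hlt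
  rw [Finset.mem_filter] at hj'B
  obtain ⟨-, hj'm, hj'rank⟩ := hj'B
  have hadj' : I.adj j' (a j) := hj'm ▸ h1 j'
  rcases hstab j' (a j) hadj' hj'lt with hjob | hmach
  · -- job side full at machines weakly preferred to `a j`
    have hmmem : a j ∈ Finset.univ.filter
        (fun m'' => I.rankJ j' m'' ≤ I.rankJ j' (a j)) := by simp
    have hsplit := Finset.sum_erase_add
      (Finset.univ.filter (fun m'' => I.rankJ j' m'' ≤ I.rankJ j' (a j)))
      (fun m'' => x0 j' m'') hmmem
    have hrest : 0 < ∑ m'' ∈ (Finset.univ.filter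
        (fun m'' => I.rankJ j' m'' ≤ I.rankJ j' (a j))).erase (a j), x0 j' m'' := by
      linarith [hjob]
    obtain ⟨m'', hm''mem, hm''pos⟩ : ∃ m'' ∈ (Finset.univ.filter
        (fun m'' => I.rankJ j' m'' ≤ I.rankJ j' (a j))).erase (a j), 0 < x0 j' m'' := by
      by_contra hc
      push_neg at hc
      have h0 : ∑ m'' ∈ (Finset.univ.filter
          (fun m'' => I.rankJ j' m'' ≤ I.rankJ j' (a j))).erase (a j), x0 j' m'' ≤ 0 :=
        Finset.sum_nonpos (fun i hi => hc i hi)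
      linarith
    rw [Finset.mem_erase, Finset.mem_filter] at hm''mem
    obtain ⟨hm''ne, -, hm''rank⟩ := hm''mem
    have hadj'' : I.adj j' m'' := by
      by_contra hcc
      rw [hz j' m'' hcc] at hm''pos; exact lt_irrefl _ hm''pos
    have hle := h3 j' m'' hm''pos
    rw [hj'm] at hle
    have : m'' = a j := I.rankJ_inj j' m'' (a j) hadj'' hadj' (le_antisymm hm''rank hle)
    exact hm''ne this
  · -- machine side full at jobs weakly preferred to `j'`: contradiction with x0 j (a j) > 0
    have hjnot : j ∉ Finset.univ.filter
        (fun j'' => I.rankM (a j) j'' ≤ I.rankM (a j) j') := by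
      simp only [Finset.mem_filter, Finset.mem_univ, true_and]
      omega
    have hsum2 : x0 j (a j) + ∑ j'' ∈ Finset.univ.filter
        (fun j'' => I.rankM (a j) j'' ≤ I.rankM (a j) j'), x0 j'' (a j)
        ≤ loadM I x0 (a j) := by
      have hL : loadM I x0 (a j) = ∑ i, x0 i (a j) := rfl
      have e1 : ∑ i ∈ insert j (Finset.univ.filter
          (fun j'' => I.rankM (a j) j'' ≤ I.rankM (a j) j')), x0 i (a j)
          = x0 j (a j) + ∑ j'' ∈ Finset.univ.filter
          (fun j'' => I.rankM (a j) j'' ≤ I.rankM (a j) j'), x0 j'' (a j) :=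
        Finset.sum_insert hjnot
      have e2 : ∑ i ∈ insert j (Finset.univ.filter
          (fun j'' => I.rankM (a j) j'' ≤ I.rankM (a j) j')), x0 i (a j)
          ≤ ∑ i, x0 i (a j) :=
        Finset.sum_le_sum_of_subset_of_nonneg (Finset.subset_univ _)
          (fun i _ _ => (hbounds i (a j)).1)
      rw [hL]
      linarith
    have := hloadM (a j)
    rw [hmach] at hsum2
    linarith

lemma step_lemma (I : Inst J M) (x0 : J → M → ℝ) (hx : FracStable I x0)
    (a : J → M) (hg : Good I x0 a) (hs : CanStep I a) :
    ∃ a', Good I x0 a' ∧ Phi I a < Phi I a' := by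
  obtain ⟨h1, h2, h3⟩ := hg
  obtain ⟨j, hworst, hover⟩ := hs
  have hkey : I.qM (a j) ≤ ∑ j' ∈ Finset.univ.filter
      (fun j' => a j' = a j ∧ I.rankM (a j) j' < I.rankM (a j) j), I.qJ j' := by
    rw [← key_sum I a h1 j hworst]; exact hover
  have hmd : a j ≠ I.md := by
    intro h
    have hl : load I a (a j) ≤ ∑ k : J, I.qJ k := load_le_total I a (a j)
    have hc := I.md_cap
    have hq := I.qJ_pos j
    rw [h] at hover hl
    linarith
  have hnonempty : (Finset.univ.filter
      (fun m' => I.adj j m' ∧ I.rankJ j (a j) < I.rankJ j m')).Nonempty :=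
    ⟨I.md, by simp [I.md_adj j, I.md_last j (a j) (h1 j) hmd]⟩
  obtain ⟨m₂, hm₂mem, hm₂min'⟩ := Finset.exists_min_image _ (I.rankJ j) hnonempty
  rw [Finset.mem_filter] at hm₂mem
  obtain ⟨-, hm₂adj, hm₂rank⟩ := hm₂mem
  have hm₂min : ∀ m', I.adj j m' → I.rankJ j (a j) < I.rankJ j m' →
      I.rankJ j m₂ ≤ I.rankJ j m' := by
    intro m' h' hlt
    exact hm₂min' m' (by simp [h', hlt])
  have hx0jm : x0 j (a j) = 0 := no_support_reject I x0 hx a h1 h3 j hkey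
  set a' : J → M := fun k => if k = j then m₂ else a k with ha'
  have ha'j : a' j = m₂ := by simp [ha']
  have ha'ne : ∀ k, k ≠ j → a' k = a k := fun k hk => by simp [ha', hk]
  have inv1 : ∀ k, I.adj k (a' k) := by
    intro k
    by_cases hk : k = j
    · subst hk; rw [ha'j]; exact hm₂adj
    · rw [ha'ne k hk]; exact h1 k
  have inv3 : ∀ k m', 0 < x0 k m' → I.rankJ k (a' k) ≤ I.rankJ k m' := by
    intro k m' hposx
    by_cases hk : k = j
    · subst hk
      rw [ha'j]
      have hle := h3 k m' hposx
      have hadjm' : I.adj k m' := by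
        by_contra hc
        rw [hx.1 k m' hc] at hposx; exact lt_irrefl _ hposx
      rcases lt_or_eq_of_le hle with hlt | heq
      · exact hm₂min m' hadjm' hlt
      · have hm'm : a k = m' := I.rankJ_inj k (a k) m' (h1 k) hadjm' heq
        rw [← hm'm, hx0jm] at hposx
        exact absurd hposx (lt_irrefl 0)
    · rw [ha'ne k hk]; exact h3 k m' hposx
  have inv2 : ∀ k m', I.adj k m' → I.rankJ k m' < I.rankJ k (a' k) →
      I.qM m' ≤ ∑ j' ∈ Finset.univ.filter
        (fun j' => a' j' = m' ∧ I.rankM m' j' < I.rankM m' k), I.qJ j' := by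
    intro k m' hadj hlt
    by_cases hk : k = j
    · subst hk
      rw [ha'j] at hlt
      rcases lt_trichotomy (I.rankJ k m') (I.rankJ k (a k)) with h | h | h
      · have hold := h2 k m' hadj h
        have hfe : (Finset.univ.filter (fun j' => a' j' = m' ∧ I.rankM m' j' < I.rankM m' k)) =
            (Finset.univ.filter (fun j' => a j' = m' ∧ I.rankM m' j' < I.rankM m' k)) := by
          apply Finset.filter_congr
          intro j' _
          by_cases hj' : j' = k
          · subst hj'
            have hne1 : ¬ (a' j' = m') := by
              rw [ha'j]
              intro hh
              rw [hh] at hm₂rank; omega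
            have hne2 : ¬ (a j' = m') := by
              intro hh
              rw [hh] at h; omega
            simp [hne1, hne2]
          · rw [ha'ne j' hj']
        rw [hfe]; exact hold
      · have hm'm : m' = a k := I.rankJ_inj k m' (a k) hadj (h1 k) h
        subst hm'm
        refine le_trans hkey (Finset.sum_le_sum_of_subset_of_nonneg ?_
          (fun i _ _ => (I.qJ_pos i).le))
        intro j' hj'
        rw [Finset.mem_filter] at hj' ⊢
        obtain ⟨-, heq, hr⟩ := hj'
        have hj'ne : j' ≠ k := fun hh => by subst hh; omega
        exact ⟨Finset.mem_univ _, by rw [ha'ne j' hj'ne]; exact heq, hr⟩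
      · exact absurd (hm₂min m' hadj h) (by omega)
    · rw [ha'ne k hk] at hlt
      have hold := h2 k m' hadj hlt
      by_cases hmm : m' = a j
      · by_cases hr : I.rankM m' j < I.rankM m' k
        · subst hmm
          refine le_trans hkey (Finset.sum_le_sum_of_subset_of_nonneg ?_
            (fun i _ _ => (I.qJ_pos i).le))
          intro j' hj'
          rw [Finset.mem_filter] at hj' ⊢
          obtain ⟨-, heq, hrr⟩ := hj'
          have hj'ne : j' ≠ j := fun hh => by subst hh; omega
          refine ⟨Finset.mem_univ _, by rw [ha'ne j' hj'ne]; exact heq, by omega⟩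
        · have hfe : (Finset.univ.filter
              (fun j' => a' j' = m' ∧ I.rankM m' j' < I.rankM m' k)) =
              (Finset.univ.filter
              (fun j' => a j' = m' ∧ I.rankM m' j' < I.rankM m' k)) := by
            apply Finset.filter_congr
            intro j' _
            by_cases hj' : j' = j
            · subst hj'
              have hne1 : ¬ (a' j' = m') := by
                rw [ha'j]
                intro hh
                rw [← hh] at hmm
                have := I.rankJ_inj j' m₂ (a j') hm₂adj (h1 j') (by rw [hmm])
                rw [this] at hm₂rank; omega
              simp [hne1, hr]
            · rw [ha'ne j' hj']
          rw [hfe]; exact hold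
      · refine le_trans hold (Finset.sum_le_sum_of_subset_of_nonneg ?_
          (fun i _ _ => (I.qJ_pos i).le))
        intro j' hj'
        rw [Finset.mem_filter] at hj' ⊢
        obtain ⟨-, heq, hrr⟩ := hj'
        have hj'ne : j' ≠ j := fun hh => hmm (by rw [← heq, hh])
        exact ⟨Finset.mem_univ _, by rw [ha'ne j' hj'ne]; exact heq, hrr⟩
  refine ⟨a', ⟨inv1, inv2, inv3⟩, ?_⟩
  unfold Phi
  apply Finset.sum_lt_sum
  · intro i _
    by_cases hi : i = j
    · subst hi; rw [ha'j]; exact hm₂rank.le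
    · rw [ha'ne i hi]
  · exact ⟨j, Finset.mem_univ j, by rw [ha'j]; exact hm₂rank⟩

lemma phi_bound (I : Inst J M) (a : J → M) (h1 : ∀ j, I.adj j (a j)) :
    Phi I a ≤ ∑ j : J, I.rankJ j I.md := by
  apply Finset.sum_le_sum
  intro j _
  by_cases h : a j = I.md
  · rw [h]
  · exact (I.md_last j (a j) (h1 j) h).le

lemma exists_stable_state (I : Inst J M) (x0 : J → M → ℝ) (hx : FracStable I x0) :
    ∃ a, Good I x0 a ∧ ¬ CanStep I a := by
  obtain ⟨a0, hg0⟩ := exists_good I x0 hx.1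
  suffices h : ∀ n a, Good I x0 a → (∑ j : J, I.rankJ j I.md) ≤ Phi I a + n →
      ∃ a', Good I x0 a' ∧ ¬ CanStep I a' by
    exact h (∑ j : J, I.rankJ j I.md) a0 hg0 (by have := phi_bound I a0 hg0.1; omega)
  intro n
  induction n with
  | zero =>
    intro a hg hb
    by_cases hs : CanStep I a
    · obtain ⟨a', hg', hphi⟩ := step_lemma I x0 hx a hg hs
      have := phi_bound I a' hg'.1
      omega
    · exact ⟨a, hg, hs⟩
  | succ n ih =>
    intro a hg hb
    by_cases hs : CanStep I a
    · obtain ⟨a', hg', hphi⟩ := step_lemma I x0 hx a hg hs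
      exact ih a' hg' (by omega)
    · exact ⟨a, hg, hs⟩

end Rounding

/-- every fractional stable allocation with all jobs fully
allocated can be rounded to a relaxed unsplit stable assignment in which each
job is assigned to a machine it weakly prefers to its least-preferred machine
receiving positive allocation in the fractional solution. -/
theorem rounding_exists (I : Inst J M) (x0 : J → M → ℝ)
    (hx0 : FracStable I x0) (hfull : ∀ j, loadJ I x0 j = I.qJ j) :
    ∃ a : J → M, IsStable I a ∧
      ∀ j mr, 0 < x0 j mr → (∀ m', 0 < x0 j m' → I.rankJ j m' ≤ I.rankJ j mr) →
        I.rankJ j (a j) ≤ I.rankJ j mr := by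
  obtain ⟨a, ⟨h1, h2, h3⟩, hns⟩ := exists_stable_state I x0 hx0
  refine ⟨a, ⟨h1, ?_, ?_⟩, fun j mr hpos _ => h3 j mr hpos⟩
  · intro m k hk hworst
    by_contra hc
    push_neg at hc
    apply hns
    refine ⟨k, ?_, ?_⟩
    · rw [hk]; exact hworst
    · rw [hk]; exact hc
  · intro k m hb
    obtain ⟨hadj, hne, hlt, hsum⟩ := hb
    have := h2 k m hadj hlt
    linarith
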